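/- Let β, x, y : ℕ → ℕ with β(n) ≥ 1 and y(n) ≥ 1 for all n ≥ 1, and adopt the convention x(0) = 0. Then ∏_{k=1}^{n} β(k)^{⌊n/k⌋} = ∏_{k=1}^{n} y(k)^{x(⌊n/k⌋)} holds for every n ≥ 1 if and only if for every n ≥ 1 one has ∑_{d ∣ n} log β(d) = ∑_{d ∣ n} (x(n/d) − x(n/d − 1))·log y(d). (That is, (Id, β) and (x, y) generate the same factorials if and only if 1 ⋆ Log(β) = Δx ⋆ Log(y).) -/

import Mathlib

open Finset Real

private lemma divisors_eq' (n : ℕ) :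
    n.divisors = (Icc 1 n).filter (· ∣ n) := by
  ext d
  simp [Nat.mem_divisors, Nat.lt_succ_iff, Nat.divisors]

private lemma key_diff (f g : ℕ → ℝ) (hg0 : g 0 = 0) (n : ℕ) (hn : 1 ≤ n) :
    ∑ k ∈ Icc 1 n, g (n / k) * f k - ∑ k ∈ Icc 1 (n - 1), g ((n - 1) / k) * f k
      = ∑ d ∈ n.divisors, (g (n / d) - g (n / d - 1)) * f d := by
  obtain ⟨m, rfl⟩ := Nat.exists_eq_succ_of_ne_zero (Nat.one_le_iff_ne_zero.mp hn)
  simp only [Nat.succ_sub_one]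
  have h1 : ∑ k ∈ Icc 1 m, g (m / k) * f k
      = ∑ k ∈ Icc 1 (m + 1), g (m / k) * f k := by
    rw [Finset.sum_Icc_succ_top (by omega)]
    rw [Nat.div_eq_of_lt (by omega), hg0]
    ring
  rw [h1, ← Finset.sum_sub_distrib, divisors_eq', Finset.sum_filter]
  refine Finset.sum_congr rfl fun k hk => ?_
  by_cases hd : k ∣ m + 1
  · rw [if_pos hd, Nat.succ_div_of_dvd hd, Nat.add_sub_cancel]; ring
  · rw [if_neg hd, Nat.succ_div_of_not_dvd hd]; ring

theorem stmt_14 (β x y : ℕ → ℕ)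
    (hβ : ∀ n, 1 ≤ n → 1 ≤ β n) (hy : ∀ n, 1 ≤ n → 1 ≤ y n)
    (hx0 : x 0 = 0) :
    (∀ n, 1 ≤ n →
        ∏ k ∈ Finset.Icc 1 n, β k ^ (n / k) =
          ∏ k ∈ Finset.Icc 1 n, y k ^ x (n / k)) ↔
      (∀ n, 1 ≤ n →
        ∑ d ∈ n.divisors, Real.log (β d) =
          ∑ d ∈ n.divisors, (((x (n / d) : ℤ) - (x (n / d - 1) : ℤ) : ℤ) : ℝ) *
            Real.log (y d)) := by
  set S1 : ℕ → ℝ := fun n => ∑ k ∈ Icc 1 n, ((n / k : ℕ) : ℝ) * Real.log (β k) with hS1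
  set S2 : ℕ → ℝ := fun n => ∑ k ∈ Icc 1 n, ((x (n / k) : ℕ) : ℝ) * Real.log (y k) with hS2
  -- log of the products
  have hlogP : ∀ n, Real.log ((∏ k ∈ Icc 1 n, β k ^ (n / k) : ℕ) : ℝ) = S1 n := by
    intro n
    push_cast
    rw [Real.log_prod]
    · exact Finset.sum_congr rfl fun k hk => Real.log_pow _ _
    · intro k hk
      have := hβ k (Finset.mem_Icc.mp hk).1
      positivity
  have hlogQ : ∀ n, Real.log ((∏ k ∈ Icc 1 n, y k ^ x (n / k) : ℕ) : ℝ) = S2 n := by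
    intro n
    push_cast
    rw [Real.log_prod]
    · exact Finset.sum_congr rfl fun k hk => Real.log_pow _ _
    · intro k hk
      have := hy k (Finset.mem_Icc.mp hk).1
      positivity
  have hPpos : ∀ n, 0 < ∏ k ∈ Icc 1 n, β k ^ (n / k) := by
    intro n
    exact Finset.prod_pos fun k hk =>
      pow_pos (hβ k (Finset.mem_Icc.mp hk).1) _
  have hQpos : ∀ n, 0 < ∏ k ∈ Icc 1 n, y k ^ x (n / k) := by
    intro n
    exact Finset.prod_pos fun k hk =>
      pow_pos (hy k (Finset.mem_Icc.mp hk).1) _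
  have hiff : ∀ n, (∏ k ∈ Icc 1 n, β k ^ (n / k) = ∏ k ∈ Icc 1 n, y k ^ x (n / k))
      ↔ S1 n = S2 n := by
    intro n
    constructor
    · intro h
      rw [← hlogP, ← hlogQ, h]
    · intro h
      have h2 : Real.log ((∏ k ∈ Icc 1 n, β k ^ (n / k) : ℕ) : ℝ)
          = Real.log ((∏ k ∈ Icc 1 n, y k ^ x (n / k) : ℕ) : ℝ) := by
        rw [hlogP, hlogQ, h]
      have := Real.log_injOn_pos (Set.mem_Ioi.mpr (by exact_mod_cast hPpos n))
        (Set.mem_Ioi.mpr (by exact_mod_cast hQpos n)) h2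
      exact_mod_cast this
  -- the two difference identities
  have hd1 : ∀ n, 1 ≤ n → S1 n - S1 (n - 1) = ∑ d ∈ n.divisors, Real.log (β d) := by
    intro n hn
    rw [hS1]
    rw [key_diff (fun k => Real.log (β k)) (fun m => (m : ℝ)) (by norm_num) n hn]
    refine Finset.sum_congr rfl fun d hd => ?_
    have hd' := Nat.mem_divisors.mp hd
    have h1 : 1 ≤ n / d := Nat.one_le_div_iff (Nat.pos_of_dvd_of_pos hd'.1
      (by omega)) |>.mpr (Nat.le_of_dvd (by omega) hd'.1)
    have : ((n / d : ℕ) : ℝ) - ((n / d - 1 : ℕ) : ℝ) = 1 := by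
      have h2 : (n / d - 1 : ℕ) + 1 = n / d := by omega
      rw [← h2]
      push_cast
      ring
    rw [this, one_mul]
  have hd2 : ∀ n, 1 ≤ n → S2 n - S2 (n - 1)
      = ∑ d ∈ n.divisors, (((x (n / d) : ℤ) - (x (n / d - 1) : ℤ) : ℤ) : ℝ) * Real.log (y d) := by
    intro n hn
    rw [hS2]
    rw [key_diff (fun k => Real.log (y k)) (fun m => ((x m : ℕ) : ℝ)) (by simp [hx0]) n hn]
    refine Finset.sum_congr rfl fun d hd => ?_
    push_cast
    ring
  constructor
  · intro hp n hn
    have hs : ∀ m, S1 m = S2 m := by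
      intro m
      rcases Nat.eq_zero_or_pos m with h0 | h1
      · subst h0; simp [hS1, hS2]
      · exact (hiff m).mp (hp m h1)
    rw [← hd1 n hn, ← hd2 n hn, hs n, hs (n - 1)]
  · intro hd n hn
    refine (hiff n).mpr ?_
    clear hn
    induction n with
    | zero => simp [hS1, hS2]
    | succ m ih =>
      have h1 := hd1 (m + 1) (by omega)
      have h2 := hd2 (m + 1) (by omega)
      have h3 := hd (m + 1) (by omega)
      simp only [Nat.add_sub_cancel] at h1 h2
      have : S1 (m + 1) - S1 m = S2 (m + 1) - S2 m := by rw [h1, h2, h3]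
      linarith
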